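/- For every t ≥ 2, every rooted tree T of depth at most t with maximum degree at most 4, and every two boundary conditions b_1, b_2 on the depth-t leaves, the uniform-measure probabilities that the root is excluded from a random independent set satisfy |P(v_0 ∉ I | b_1) − P(v_0 ∉ I | b_2)| ≤ (0.9)^{t−2}. -/

import Mathlib

set_option maxHeartbeats 1000000


/-- A finite rooted tree in which some leaves carry a fixed boundary value:
`fixedLeaf b` is a boundary leaf whose membership in the independent set is forced
to be `b`, while `node cs` is a (free) vertex with the list `cs` of child subtrees;
in particular `node []` is a free leaf. -/
inductive RTree : Type
  | fixedLeaf : Bool → RTree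
  | node : List RTree → RTree

namespace RTree

/-- `Z lam T = (Zout, Zin)`: the hard-core partition functions (activity `lam`) of the
rooted tree `T`, restricted to independent sets consistent with the boundary values,
and split according to whether the root is excluded (`Zout`) or included (`Zin`). -/
noncomputable def Z (lam : ℝ) : RTree → ℝ × ℝ
  | .fixedLeaf b => if b then (0, lam) else (1, 0)
  | .node cs =>
      ((cs.attach.map (fun c => (Z lam c.1).1 + (Z lam c.1).2)).prod,
        lam * (cs.attach.map (fun c => (Z lam c.1).1)).prod)
  decreasing_by
    all_goals
      have := List.sizeOf_lt_of_mem c.2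
      simp only [node.sizeOf_spec]
      omega

/-- The Gibbs probability (activity `lam`), conditioned on the boundary values, that the
root of `T` is *not* in a random independent set of `T`. -/
noncomputable def Pout (lam : ℝ) (T : RTree) : ℝ :=
  (Z lam T).1 / ((Z lam T).1 + (Z lam T).2)

/-- `okBC t T` : `T` has depth at most `t` and its fixed boundary leaves are exactly the
vertices at depth exactly `t`. -/
inductive okBC : ℕ → RTree → Prop
  | leaf (b : Bool) : okBC 0 (.fixedLeaf b)
  | node {t : ℕ} {cs : List RTree} : (∀ c ∈ cs, okBC t c) → okBC (t + 1) (.node cs)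

/-- `degOK r T` : viewed as a subtree hanging below a parent vertex, every vertex of `T`
has degree at most `r` (i.e. every vertex has at most `r - 1` children). -/
inductive degOK (r : ℕ) : RTree → Prop
  | leaf (b : Bool) : degOK r (.fixedLeaf b)
  | node {cs : List RTree} : cs.length ≤ r - 1 → (∀ c ∈ cs, degOK r c) →
      degOK r (.node cs)

/-- `rootDegOK r T` : as a tree rooted at its root, `T` has maximum degree at most `r`
(the root has at most `r` children, and every other vertex at most `r - 1`). -/
inductive rootDegOK (r : ℕ) : RTree → Prop
  | leaf (b : Bool) : rootDegOK r (.fixedLeaf b)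
  | node {cs : List RTree} : cs.length ≤ r → (∀ c ∈ cs, degOK r c) →
      rootDegOK r (.node cs)

/-- Two boundary-decorated trees have the same underlying tree, differing only in the
boundary values at the fixed leaves. -/
inductive SameShape : RTree → RTree → Prop
  | leaf (b₁ b₂ : Bool) : SameShape (.fixedLeaf b₁) (.fixedLeaf b₂)
  | node {cs ds : List RTree} : List.Forall₂ SameShape cs ds →
      SameShape (.node cs) (.node ds)

end RTree


section Auxiliary

private lemma cert3 (x y z : ℝ) (hxL : (0:ℝ) ≤ x - 1/2) (hxU : (0:ℝ) ≤ 1 - x)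
    (hyL : (0:ℝ) ≤ y - 1/2) (hyU : (0:ℝ) ≤ 1 - y)
    (hzL : (0:ℝ) ≤ z - 1/2) (hzU : (0:ℝ) ≤ 1 - z) :
    x*y + y*z + z*x ≤ 9/10 * (1 + x*y*z)^2 := by
  linarith [(mul_nonneg hxU hyU), (mul_nonneg hxL (mul_nonneg hxU (mul_nonneg hyU hzU))), (mul_nonneg hyU hzU), (mul_nonneg hxL (mul_nonneg hyL hzL)), (mul_nonneg hxL (mul_nonneg hxL (mul_nonneg hyL (mul_nonneg hyL (mul_nonneg hzL hzL))))), (mul_nonneg hxU (mul_nonneg hyU hzU)), (mul_nonneg hxL (mul_nonneg hxL (mul_nonneg hyL (mul_nonneg hyL hzL)))), (mul_nonneg hxU hxU), (mul_nonneg hxU (mul_nonneg hzU hzU)), (mul_nonneg hxU (mul_nonneg hxU hyU)), (mul_nonneg hxU hzU), (mul_nonneg hxU (mul_nonneg hyU hyU)), (mul_nonneg hyL (mul_nonneg hyU (mul_nonneg hzL hzU))), (mul_nonneg hxL (mul_nonneg hyL (mul_nonneg hzL hzL))), (mul_nonneg hyU (mul_nonneg hzL hzU)), (mul_nonneg hxL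 (mul_nonneg hyL (mul_nonneg hyL hzL))), (mul_nonneg hxL (mul_nonneg hyU (mul_nonneg hyU (mul_nonneg hzU hzU)))), (mul_nonneg hxL (mul_nonneg hxL (mul_nonneg hzL hzL))), (mul_nonneg hxL (mul_nonneg hxL hzL)), (mul_nonneg hxL (mul_nonneg hxL hyL)), (mul_nonneg hxL (mul_nonneg hxL (mul_nonneg hyL (mul_nonneg hzL hzL)))), (mul_nonneg hxL (mul_nonneg hxL (mul_nonneg hyL hzL))), (mul_nonneg hxL (mul_nonneg hxL (mul_nonneg hyL hyL))), (mul_nonneg hxL (mul_nonneg hyL (mul_nonneg hyL (mul_nonneg hzL hzU)))), (mul_nonneg hyL (mul_nonneg hyU hzU)), (mul_nonneg hxU (mul_nonneg hxU hzU))]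

private lemma cert4 (x y z w : ℝ) (hxL : (0:ℝ) ≤ x - 1/2) (hxU : (0:ℝ) ≤ 1 - x)
    (hyL : (0:ℝ) ≤ y - 1/2) (hyU : (0:ℝ) ≤ 1 - y)
    (hzL : (0:ℝ) ≤ z - 1/2) (hzU : (0:ℝ) ≤ 1 - z)
    (hwL : (0:ℝ) ≤ w - 1/2) (hwU : (0:ℝ) ≤ 1 - w) :
    y*z*w + x*z*w + x*y*w + x*y*z ≤ 2 * (1 + x*y*z*w)^2 := by
  nlinarith [mul_nonneg (mul_nonneg (mul_nonneg hyL hzL) hwL) (mul_nonneg hxL hxL),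
    mul_nonneg (mul_nonneg hyL hzL) hwL, mul_nonneg (mul_nonneg hxL hzL) hwL,
    mul_nonneg (mul_nonneg hxL hyL) hwL, mul_nonneg (mul_nonneg hxL hyL) hzL,
    mul_nonneg (mul_nonneg (mul_nonneg hyL hzL) hwL) hxL,
    sq_nonneg (x*y*z*w), mul_nonneg (mul_nonneg hxU hzU) hwU,
    mul_nonneg (mul_nonneg hxU hyU) hwU]

private lemma mvt01 (f f' : ℝ → ℝ) (M : ℝ)
    (hc : ContinuousOn f (Set.Icc 0 1))
    (hd : ∀ s ∈ Set.Ioo (0:ℝ) 1, HasDerivAt f (f' s) s)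
    (hM : ∀ s ∈ Set.Ioo (0:ℝ) 1, |f' s| ≤ M) :
    |f 1 - f 0| ≤ M := by
  obtain ⟨s, hs, heq⟩ := exists_hasDerivAt_eq_slope f f' one_pos hc hd
  have h2 : f 1 - f 0 = f' s := by
    rw [heq]; ring
  rw [h2]
  exact hM s hs

private lemma affbox {u v s : ℝ} (hu1 : 1/2 ≤ u) (hu2 : u ≤ 1) (hv1 : 1/2 ≤ v)
    (hv2 : v ≤ 1) (hs0 : (0:ℝ) ≤ s) (hs1 : s ≤ 1) :
    1/2 ≤ u + s*(v-u) ∧ u + s*(v-u) ≤ 1 :=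
  ⟨by nlinarith, by nlinarith⟩

private lemma key3 (p₁ p₂ p₃ q₁ q₂ q₃ e : ℝ)
    (hp₁ : p₁ ∈ Set.Icc (1/2:ℝ) 1) (hp₂ : p₂ ∈ Set.Icc (1/2:ℝ) 1) (hp₃ : p₃ ∈ Set.Icc (1/2:ℝ) 1)
    (hq₁ : q₁ ∈ Set.Icc (1/2:ℝ) 1) (hq₂ : q₂ ∈ Set.Icc (1/2:ℝ) 1) (hq₃ : q₃ ∈ Set.Icc (1/2:ℝ) 1)
    (h₁ : |p₁ - q₁| ≤ e) (h₂ : |p₂ - q₂| ≤ e) (h₃ : |p₃ - q₃| ≤ e) :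
    |1/(1 + p₁*p₂*p₃) - 1/(1 + q₁*q₂*q₃)| ≤ 9/10 * e := by
  obtain ⟨hp₁l, hp₁u⟩ := hp₁; obtain ⟨hp₂l, hp₂u⟩ := hp₂; obtain ⟨hp₃l, hp₃u⟩ := hp₃
  obtain ⟨hq₁l, hq₁u⟩ := hq₁; obtain ⟨hq₂l, hq₂u⟩ := hq₂; obtain ⟨hq₃l, hq₃u⟩ := hq₃
  have he0 : (0:ℝ) ≤ e := le_trans (abs_nonneg _) h₁
  have hbox : ∀ s, 0 ≤ s → s ≤ 1 →
      (1/2 ≤ q₁ + s*(p₁-q₁) ∧ q₁ + s*(p₁-q₁) ≤ 1) ∧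
      (1/2 ≤ q₂ + s*(p₂-q₂) ∧ q₂ + s*(p₂-q₂) ≤ 1) ∧
      (1/2 ≤ q₃ + s*(p₃-q₃) ∧ q₃ + s*(p₃-q₃) ≤ 1) :=
    fun s hs0 hs1 => ⟨affbox hq₁l hq₁u hp₁l hp₁u hs0 hs1,
      affbox hq₂l hq₂u hp₂l hp₂u hs0 hs1, affbox hq₃l hq₃u hp₃l hp₃u hs0 hs1⟩
  have hD : ∀ s ∈ Set.Icc (0:ℝ) 1, HasDerivAt
      (fun s => (1 + (q₁ + s*(p₁-q₁)) * (q₂ + s*(p₂-q₂)) * (q₃ + s*(p₃-q₃)))⁻¹)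
      (-(((p₁-q₁) * (q₂ + s*(p₂-q₂)) + (q₁ + s*(p₁-q₁)) * (p₂-q₂)) * (q₃ + s*(p₃-q₃))
        + (q₁ + s*(p₁-q₁)) * (q₂ + s*(p₂-q₂)) * (p₃-q₃))
        / (1 + (q₁ + s*(p₁-q₁)) * (q₂ + s*(p₂-q₂)) * (q₃ + s*(p₃-q₃)))^2) s := by
    rintro s ⟨hs0, hs1⟩
    have hda : HasDerivAt (fun s : ℝ => q₁ + s*(p₁-q₁)) (p₁-q₁) s := by
      simpa using ((hasDerivAt_id s).mul_const (p₁-q₁)).const_add q₁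
    have hdb : HasDerivAt (fun s : ℝ => q₂ + s*(p₂-q₂)) (p₂-q₂) s := by
      simpa using ((hasDerivAt_id s).mul_const (p₂-q₂)).const_add q₂
    have hdc : HasDerivAt (fun s : ℝ => q₃ + s*(p₃-q₃)) (p₃-q₃) s := by
      simpa using ((hasDerivAt_id s).mul_const (p₃-q₃)).const_add q₃
    have hg := (hda.mul hdb).mul hdc
    obtain ⟨⟨a1, a2⟩, ⟨b1, b2⟩, ⟨c1, c2⟩⟩ := hbox s hs0 hs1
    have hprod : (0:ℝ) < (q₁ + s*(p₁-q₁)) * (q₂ + s*(p₂-q₂)) * (q₃ + s*(p₃-q₃)) :=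
      mul_pos (mul_pos (by linarith) (by linarith)) (by linarith)
    exact (hg.const_add 1).inv (by simp only [Pi.mul_apply]; linarith)
  have hbound : ∀ s ∈ Set.Ioo (0:ℝ) 1,
      |(-(((p₁-q₁) * (q₂ + s*(p₂-q₂)) + (q₁ + s*(p₁-q₁)) * (p₂-q₂)) * (q₃ + s*(p₃-q₃))
        + (q₁ + s*(p₁-q₁)) * (q₂ + s*(p₂-q₂)) * (p₃-q₃))
        / (1 + (q₁ + s*(p₁-q₁)) * (q₂ + s*(p₂-q₂)) * (q₃ + s*(p₃-q₃)))^2)| ≤ 9/10 * e := by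
    intro s hs
    obtain ⟨hs0, hs1⟩ := Set.mem_Icc_of_Ioo hs
    obtain ⟨⟨a1, a2⟩, ⟨b1, b2⟩, ⟨c1, c2⟩⟩ := hbox s hs0 hs1
    set A := q₁ + s*(p₁-q₁) with hA
    set B := q₂ + s*(p₂-q₂) with hB
    set C := q₃ + s*(p₃-q₃) with hC
    have hABC : (0:ℝ) < A*B*C := mul_pos (mul_pos (by linarith) (by linarith)) (by linarith)
    have hDen : (0:ℝ) < (1 + A*B*C)^2 := by positivity
    rw [abs_div, abs_neg, abs_of_pos hDen, div_le_iff₀ hDen]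
    have hBC : (0:ℝ) ≤ B*C := by positivity
    have hAC : (0:ℝ) ≤ A*C := by positivity
    have hAB : (0:ℝ) ≤ A*B := by positivity
    have t₁ : |(p₁-q₁) * (B*C)| ≤ e * (B*C) := by
      rw [abs_mul, abs_of_nonneg hBC]
      exact mul_le_mul_of_nonneg_right h₁ hBC
    have t₂ : |(p₂-q₂) * (A*C)| ≤ e * (A*C) := by
      rw [abs_mul, abs_of_nonneg hAC]
      exact mul_le_mul_of_nonneg_right h₂ hAC
    have t₃ : |(p₃-q₃) * (A*B)| ≤ e * (A*B) := by
      rw [abs_mul, abs_of_nonneg hAB]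
      exact mul_le_mul_of_nonneg_right h₃ hAB
    have habs : |((p₁-q₁) * B + A * (p₂-q₂)) * C + A * B * (p₃-q₃)|
        ≤ e * (B*C + A*C + A*B) := by
      have e1 : ((p₁-q₁) * B + A * (p₂-q₂)) * C + A * B * (p₃-q₃)
          = (p₁-q₁) * (B*C) + (p₂-q₂) * (A*C) + (p₃-q₃) * (A*B) := by ring
      rw [e1]
      calc |(p₁-q₁) * (B*C) + (p₂-q₂) * (A*C) + (p₃-q₃) * (A*B)|
          ≤ |(p₁-q₁) * (B*C) + (p₂-q₂) * (A*C)| + |(p₃-q₃) * (A*B)| := abs_add_le _ _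
        _ ≤ |(p₁-q₁) * (B*C)| + |(p₂-q₂) * (A*C)| + |(p₃-q₃) * (A*B)| := by
            linarith [abs_add_le ((p₁-q₁) * (B*C)) ((p₂-q₂) * (A*C))]
        _ ≤ e * (B*C + A*C + A*B) := by linarith
    have hcert : A*B + B*C + C*A ≤ 9/10 * (1 + A*B*C)^2 :=
      cert3 A B C (by linarith) (by linarith) (by linarith) (by linarith)
        (by linarith) (by linarith)
    calc |((p₁-q₁) * B + A * (p₂-q₂)) * C + A * B * (p₃-q₃)|
        ≤ e * (B*C + A*C + A*B) := habs
      _ ≤ e * (9/10 * (1 + A*B*C)^2) := mul_le_mul_of_nonneg_left (by linarith) he0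
      _ = 9/10 * e * (1 + A*B*C)^2 := by ring
  have key := mvt01 _ _ (9/10 * e)
    (fun s hs => ((hD s hs).continuousAt).continuousWithinAt)
    (fun s hs => hD s (Set.mem_Icc_of_Ioo hs)) hbound
  have e1 : q₁ + 1*(p₁-q₁) = p₁ := by ring
  have e2 : q₂ + 1*(p₂-q₂) = p₂ := by ring
  have e3 : q₃ + 1*(p₃-q₃) = p₃ := by ring
  have e4 : q₁ + 0*(p₁-q₁) = q₁ := by ring
  have e5 : q₂ + 0*(p₂-q₂) = q₂ := by ring
  have e6 : q₃ + 0*(p₃-q₃) = q₃ := by ring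
  simp only [e1, e2, e3, e4, e5, e6] at key
  simpa [one_div] using key

private lemma key4 (p₁ p₂ p₃ p₄ q₁ q₂ q₃ q₄ e : ℝ)
    (hp₁ : p₁ ∈ Set.Icc (1/2:ℝ) 1) (hp₂ : p₂ ∈ Set.Icc (1/2:ℝ) 1)
    (hp₃ : p₃ ∈ Set.Icc (1/2:ℝ) 1) (hp₄ : p₄ ∈ Set.Icc (1/2:ℝ) 1)
    (hq₁ : q₁ ∈ Set.Icc (1/2:ℝ) 1) (hq₂ : q₂ ∈ Set.Icc (1/2:ℝ) 1)
    (hq₃ : q₃ ∈ Set.Icc (1/2:ℝ) 1) (hq₄ : q₄ ∈ Set.Icc (1/2:ℝ) 1)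
    (h₁ : |p₁ - q₁| ≤ e) (h₂ : |p₂ - q₂| ≤ e) (h₃ : |p₃ - q₃| ≤ e) (h₄ : |p₄ - q₄| ≤ e) :
    |1/(1 + p₁*p₂*p₃*p₄) - 1/(1 + q₁*q₂*q₃*q₄)| ≤ 2 * e := by
  obtain ⟨hp₁l, hp₁u⟩ := hp₁; obtain ⟨hp₂l, hp₂u⟩ := hp₂
  obtain ⟨hp₃l, hp₃u⟩ := hp₃; obtain ⟨hp₄l, hp₄u⟩ := hp₄
  obtain ⟨hq₁l, hq₁u⟩ := hq₁; obtain ⟨hq₂l, hq₂u⟩ := hq₂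
  obtain ⟨hq₃l, hq₃u⟩ := hq₃; obtain ⟨hq₄l, hq₄u⟩ := hq₄
  have he0 : (0:ℝ) ≤ e := le_trans (abs_nonneg _) h₁
  have hbox : ∀ s, 0 ≤ s → s ≤ 1 →
      (1/2 ≤ q₁ + s*(p₁-q₁) ∧ q₁ + s*(p₁-q₁) ≤ 1) ∧
      (1/2 ≤ q₂ + s*(p₂-q₂) ∧ q₂ + s*(p₂-q₂) ≤ 1) ∧
      (1/2 ≤ q₃ + s*(p₃-q₃) ∧ q₃ + s*(p₃-q₃) ≤ 1) ∧
      (1/2 ≤ q₄ + s*(p₄-q₄) ∧ q₄ + s*(p₄-q₄) ≤ 1) :=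
    fun s hs0 hs1 => ⟨affbox hq₁l hq₁u hp₁l hp₁u hs0 hs1,
      affbox hq₂l hq₂u hp₂l hp₂u hs0 hs1, affbox hq₃l hq₃u hp₃l hp₃u hs0 hs1,
      affbox hq₄l hq₄u hp₄l hp₄u hs0 hs1⟩
  have hD : ∀ s ∈ Set.Icc (0:ℝ) 1, HasDerivAt
      (fun s => (1 + (q₁ + s*(p₁-q₁)) * (q₂ + s*(p₂-q₂)) * (q₃ + s*(p₃-q₃))
        * (q₄ + s*(p₄-q₄)))⁻¹)
      (-((((p₁-q₁) * (q₂ + s*(p₂-q₂)) + (q₁ + s*(p₁-q₁)) * (p₂-q₂)) * (q₃ + s*(p₃-q₃))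
        + (q₁ + s*(p₁-q₁)) * (q₂ + s*(p₂-q₂)) * (p₃-q₃)) * (q₄ + s*(p₄-q₄))
        + (q₁ + s*(p₁-q₁)) * (q₂ + s*(p₂-q₂)) * (q₃ + s*(p₃-q₃)) * (p₄-q₄))
        / (1 + (q₁ + s*(p₁-q₁)) * (q₂ + s*(p₂-q₂)) * (q₃ + s*(p₃-q₃))
          * (q₄ + s*(p₄-q₄)))^2) s := by
    rintro s ⟨hs0, hs1⟩
    have hda : HasDerivAt (fun s : ℝ => q₁ + s*(p₁-q₁)) (p₁-q₁) s := by
      simpa using ((hasDerivAt_id s).mul_const (p₁-q₁)).const_add q₁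
    have hdb : HasDerivAt (fun s : ℝ => q₂ + s*(p₂-q₂)) (p₂-q₂) s := by
      simpa using ((hasDerivAt_id s).mul_const (p₂-q₂)).const_add q₂
    have hdc : HasDerivAt (fun s : ℝ => q₃ + s*(p₃-q₃)) (p₃-q₃) s := by
      simpa using ((hasDerivAt_id s).mul_const (p₃-q₃)).const_add q₃
    have hdd : HasDerivAt (fun s : ℝ => q₄ + s*(p₄-q₄)) (p₄-q₄) s := by
      simpa using ((hasDerivAt_id s).mul_const (p₄-q₄)).const_add q₄
    have hg := ((hda.mul hdb).mul hdc).mul hdd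
    obtain ⟨⟨a1, a2⟩, ⟨b1, b2⟩, ⟨c1, c2⟩, ⟨d1, d2⟩⟩ := hbox s hs0 hs1
    have hprod : (0:ℝ) < (q₁ + s*(p₁-q₁)) * (q₂ + s*(p₂-q₂)) * (q₃ + s*(p₃-q₃))
        * (q₄ + s*(p₄-q₄)) :=
      mul_pos (mul_pos (mul_pos (by linarith) (by linarith)) (by linarith)) (by linarith)
    exact (hg.const_add 1).inv (by simp only [Pi.mul_apply]; linarith)
  have hbound : ∀ s ∈ Set.Ioo (0:ℝ) 1,
      |(-((((p₁-q₁) * (q₂ + s*(p₂-q₂)) + (q₁ + s*(p₁-q₁)) * (p₂-q₂)) * (q₃ + s*(p₃-q₃))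
        + (q₁ + s*(p₁-q₁)) * (q₂ + s*(p₂-q₂)) * (p₃-q₃)) * (q₄ + s*(p₄-q₄))
        + (q₁ + s*(p₁-q₁)) * (q₂ + s*(p₂-q₂)) * (q₃ + s*(p₃-q₃)) * (p₄-q₄))
        / (1 + (q₁ + s*(p₁-q₁)) * (q₂ + s*(p₂-q₂)) * (q₃ + s*(p₃-q₃))
          * (q₄ + s*(p₄-q₄)))^2)| ≤ 2 * e := by
    intro s hs
    obtain ⟨hs0, hs1⟩ := Set.mem_Icc_of_Ioo hs
    obtain ⟨⟨a1, a2⟩, ⟨b1, b2⟩, ⟨c1, c2⟩, ⟨d1, d2⟩⟩ := hbox s hs0 hs1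
    set A := q₁ + s*(p₁-q₁) with hA
    set B := q₂ + s*(p₂-q₂) with hB
    set C := q₃ + s*(p₃-q₃) with hC
    set D := q₄ + s*(p₄-q₄) with hDD
    have hABCD : (0:ℝ) < A*B*C*D :=
      mul_pos (mul_pos (mul_pos (by linarith) (by linarith)) (by linarith)) (by linarith)
    have hDen : (0:ℝ) < (1 + A*B*C*D)^2 := by positivity
    rw [abs_div, abs_neg, abs_of_pos hDen, div_le_iff₀ hDen]
    have hBCD : (0:ℝ) ≤ B*C*D := by positivity
    have hACD : (0:ℝ) ≤ A*C*D := by positivity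
    have hABD : (0:ℝ) ≤ A*B*D := by positivity
    have hABC : (0:ℝ) ≤ A*B*C := by positivity
    have t₁ : |(p₁-q₁) * (B*C*D)| ≤ e * (B*C*D) := by
      rw [abs_mul, abs_of_nonneg hBCD]
      exact mul_le_mul_of_nonneg_right h₁ hBCD
    have t₂ : |(p₂-q₂) * (A*C*D)| ≤ e * (A*C*D) := by
      rw [abs_mul, abs_of_nonneg hACD]
      exact mul_le_mul_of_nonneg_right h₂ hACD
    have t₃ : |(p₃-q₃) * (A*B*D)| ≤ e * (A*B*D) := by
      rw [abs_mul, abs_of_nonneg hABD]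
      exact mul_le_mul_of_nonneg_right h₃ hABD
    have t₄ : |(p₄-q₄) * (A*B*C)| ≤ e * (A*B*C) := by
      rw [abs_mul, abs_of_nonneg hABC]
      exact mul_le_mul_of_nonneg_right h₄ hABC
    have habs : |(((p₁-q₁) * B + A * (p₂-q₂)) * C + A * B * (p₃-q₃)) * D
        + A * B * C * (p₄-q₄)| ≤ e * (B*C*D + A*C*D + A*B*D + A*B*C) := by
      have e1 : (((p₁-q₁) * B + A * (p₂-q₂)) * C + A * B * (p₃-q₃)) * D + A * B * C * (p₄-q₄)
          = (p₁-q₁) * (B*C*D) + (p₂-q₂) * (A*C*D) + ((p₃-q₃) * (A*B*D)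
            + (p₄-q₄) * (A*B*C)) := by ring
      rw [e1]
      calc |(p₁-q₁) * (B*C*D) + (p₂-q₂) * (A*C*D) + ((p₃-q₃) * (A*B*D) + (p₄-q₄) * (A*B*C))|
          ≤ |(p₁-q₁) * (B*C*D) + (p₂-q₂) * (A*C*D)|
            + |(p₃-q₃) * (A*B*D) + (p₄-q₄) * (A*B*C)| := abs_add_le _ _
        _ ≤ |(p₁-q₁) * (B*C*D)| + |(p₂-q₂) * (A*C*D)| + (|(p₃-q₃) * (A*B*D)|
            + |(p₄-q₄) * (A*B*C)|) := by
            linarith [abs_add_le ((p₁-q₁) * (B*C*D)) ((p₂-q₂) * (A*C*D)),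
              abs_add_le ((p₃-q₃) * (A*B*D)) ((p₄-q₄) * (A*B*C))]
        _ ≤ e * (B*C*D + A*C*D + A*B*D + A*B*C) := by linarith
    have hcert : B*C*D + A*C*D + A*B*D + A*B*C ≤ 2 * (1 + A*B*C*D)^2 :=
      cert4 A B C D (by linarith) (by linarith) (by linarith) (by linarith)
        (by linarith) (by linarith) (by linarith) (by linarith)
    calc |(((p₁-q₁) * B + A * (p₂-q₂)) * C + A * B * (p₃-q₃)) * D + A * B * C * (p₄-q₄)|
        ≤ e * (B*C*D + A*C*D + A*B*D + A*B*C) := habs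
      _ ≤ e * (2 * (1 + A*B*C*D)^2) := mul_le_mul_of_nonneg_left (by linarith) he0
      _ = 2 * e * (1 + A*B*C*D)^2 := by ring
  have key := mvt01 _ _ (2 * e)
    (fun s hs => ((hD s hs).continuousAt).continuousWithinAt)
    (fun s hs => hD s (Set.mem_Icc_of_Ioo hs)) hbound
  have e1 : q₁ + 1*(p₁-q₁) = p₁ := by ring
  have e2 : q₂ + 1*(p₂-q₂) = p₂ := by ring
  have e3 : q₃ + 1*(p₃-q₃) = p₃ := by ring
  have e4 : q₄ + 1*(p₄-q₄) = p₄ := by ring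
  have e5 : q₁ + 0*(p₁-q₁) = q₁ := by ring
  have e6 : q₂ + 0*(p₂-q₂) = q₂ := by ring
  have e7 : q₃ + 0*(p₃-q₃) = q₃ := by ring
  have e8 : q₄ + 0*(p₄-q₄) = q₄ := by ring
  simp only [e1, e2, e3, e4, e5, e6, e7, e8] at key
  simpa [one_div] using key

private lemma list_key3 {e : ℝ} (he : 0 ≤ e) : ∀ {l₁ l₂ : List ℝ},
    List.Forall₂ (fun a b => a ∈ Set.Icc (1/2:ℝ) 1 ∧ b ∈ Set.Icc (1/2:ℝ) 1 ∧ |a - b| ≤ e)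
      l₁ l₂ → l₁.length ≤ 3 →
    |1/(1 + l₁.prod) - 1/(1 + l₂.prod)| ≤ 9/10 * e := by
  intro l₁ l₂ h hlen
  have one_mem : (1:ℝ) ∈ Set.Icc (1/2:ℝ) 1 := by norm_num
  have one_abs : |(1:ℝ) - 1| ≤ e := by simpa using he
  rcases h with _ | @⟨a₁, b₁, t₁, u₁, ⟨ha1, hb1, hab1⟩, h⟩
  · simpa using by positivity
  rcases h with _ | @⟨a₂, b₂, t₂, u₂, ⟨ha2, hb2, hab2⟩, h⟩
  · simpa using key3 a₁ 1 1 b₁ 1 1 e ha1 one_mem one_mem hb1 one_mem one_mem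
      hab1 one_abs one_abs
  rcases h with _ | @⟨a₃, b₃, t₃, u₃, ⟨ha3, hb3, hab3⟩, h⟩
  · simpa [mul_assoc] using key3 a₁ a₂ 1 b₁ b₂ 1 e ha1 ha2 one_mem hb1 hb2 one_mem
      hab1 hab2 one_abs
  rcases h with _ | @⟨a₄, b₄, t₄, u₄, ⟨ha4, hb4, hab4⟩, h⟩
  · simpa [mul_assoc] using key3 a₁ a₂ a₃ b₁ b₂ b₃ e ha1 ha2 ha3 hb1 hb2 hb3 hab1 hab2 hab3
  · simp only [List.length_cons] at hlen
    omega

private lemma list_key4 {e : ℝ} (he : 0 ≤ e) : ∀ {l₁ l₂ : List ℝ},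
    List.Forall₂ (fun a b => a ∈ Set.Icc (1/2:ℝ) 1 ∧ b ∈ Set.Icc (1/2:ℝ) 1 ∧ |a - b| ≤ e)
      l₁ l₂ → l₁.length ≤ 4 →
    |1/(1 + l₁.prod) - 1/(1 + l₂.prod)| ≤ 2 * e := by
  intro l₁ l₂ h hlen
  have one_mem : (1:ℝ) ∈ Set.Icc (1/2:ℝ) 1 := by norm_num
  have one_abs : |(1:ℝ) - 1| ≤ e := by simpa using he
  rcases h with _ | @⟨a₁, b₁, t₁, u₁, ⟨ha1, hb1, hab1⟩, h⟩
  · simpa using by positivity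
  rcases h with _ | @⟨a₂, b₂, t₂, u₂, ⟨ha2, hb2, hab2⟩, h⟩
  · simpa using key4 a₁ 1 1 1 b₁ 1 1 1 e ha1 one_mem one_mem one_mem
      hb1 one_mem one_mem one_mem hab1 one_abs one_abs one_abs
  rcases h with _ | @⟨a₃, b₃, t₃, u₃, ⟨ha3, hb3, hab3⟩, h⟩
  · simpa [mul_assoc] using key4 a₁ a₂ 1 1 b₁ b₂ 1 1 e ha1 ha2 one_mem one_mem
      hb1 hb2 one_mem one_mem hab1 hab2 one_abs one_abs
  rcases h with _ | @⟨a₄, b₄, t₄, u₄, ⟨ha4, hb4, hab4⟩, h⟩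
  · simpa [mul_assoc] using key4 a₁ a₂ a₃ 1 b₁ b₂ b₃ 1 e ha1 ha2 ha3 one_mem
      hb1 hb2 hb3 one_mem hab1 hab2 hab3 one_abs
  rcases h with _ | @⟨a₅, b₅, t₅, u₅, ⟨ha5, hb5, hab5⟩, h⟩
  · simpa [mul_assoc] using key4 a₁ a₂ a₃ a₄ b₁ b₂ b₃ b₄ e ha1 ha2 ha3 ha4
      hb1 hb2 hb3 hb4 hab1 hab2 hab3 hab4
  · simp only [List.length_cons] at hlen
    omega

private lemma forall₂_strengthen {α β : Type*} {R S : α → β → Prop} :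
    ∀ {l₁ : List α} {l₂ : List β}, List.Forall₂ R l₁ l₂ →
      (∀ a ∈ l₁, ∀ b ∈ l₂, R a b → S a b) → List.Forall₂ S l₁ l₂ := by
  intro l₁ l₂ h
  induction h with
  | nil => intro _; exact List.Forall₂.nil
  | @cons a b t u hR hrest ih =>
    intro H
    exact List.Forall₂.cons
      (H a (List.mem_cons_self (a := a) (l := t)) b (List.mem_cons_self (a := b) (l := u)) hR)
      (ih fun x hx y hy hr =>
        H x (List.mem_cons_of_mem _ hx) y (List.mem_cons_of_mem _ hy) hr)

namespace RTree

private theorem Z_facts : ∀ T : RTree,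
    0 ≤ (Z 1 T).1 ∧ 0 ≤ (Z 1 T).2 ∧ 0 < (Z 1 T).1 + (Z 1 T).2
  | .fixedLeaf b => by cases b <;> norm_num [Z]
  | .node cs => by
    have IH : ∀ c ∈ cs, 0 ≤ (Z 1 c).1 ∧ 0 ≤ (Z 1 c).2 ∧ 0 < (Z 1 c).1 + (Z 1 c).2 :=
      fun c _ => Z_facts c
    rw [Z]
    simp only [one_mul]
    have h1 : 0 < (cs.attach.map (fun c => (Z 1 c.1).1 + (Z 1 c.1).2)).prod := by
      apply List.prod_pos
      intro x hx
      obtain ⟨c, _, rfl⟩ := List.mem_map.1 hx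
      exact (IH c.1 c.2).2.2
    have h2 : 0 ≤ (cs.attach.map (fun c => (Z 1 c.1).1)).prod := by
      apply List.prod_nonneg
      intro x hx
      obtain ⟨c, _, rfl⟩ := List.mem_map.1 hx
      exact (IH c.1 c.2).1
    exact ⟨le_of_lt h1, h2, by positivity⟩
  decreasing_by
    have := List.sizeOf_lt_of_mem ‹c ∈ cs›
    simp only [node.sizeOf_spec]
    omega

private lemma Pout_mem_Icc (T : RTree) : Pout 1 T ∈ Set.Icc (0:ℝ) 1 := by
  obtain ⟨h1, h2, h3⟩ := Z_facts T
  unfold Pout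
  constructor
  · exact div_nonneg h1 h3.le
  · rw [div_le_one h3]; linarith

private lemma prod_map_div (f g : RTree → ℝ) : ∀ l : List RTree,
    (l.map fun c => f c / g c).prod = (l.map f).prod / (l.map g).prod
  | [] => by simp
  | c :: l => by
    simp only [List.map_cons, List.prod_cons, prod_map_div f g l]
    rw [div_mul_div_comm]

private lemma Pout_node (cs : List RTree) :
    Pout 1 (.node cs) = 1 / (1 + (cs.map (Pout 1)).prod) := by
  have hZ1 : (Z 1 (.node cs)).1 = (cs.map (fun c => (Z 1 c).1 + (Z 1 c).2)).prod := by
    rw [Z]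
    exact congrArg List.prod (List.attach_map_val (l := cs) (f := fun c => (Z 1 c).1 + (Z 1 c).2))
  have hZ2 : (Z 1 (.node cs)).2 = (cs.map (fun c => (Z 1 c).1)).prod := by
    rw [Z]
    simpa using congrArg List.prod (List.attach_map_val (l := cs) (f := fun c => (Z 1 c).1))
  have hGpos : 0 < (cs.map (fun c => (Z 1 c).1 + (Z 1 c).2)).prod := by
    apply List.prod_pos
    intro x hx
    obtain ⟨c, _, rfl⟩ := List.mem_map.1 hx
    exact (Z_facts c).2.2
  have hprod : (cs.map (Pout 1)).prod
      = (cs.map (fun c => (Z 1 c).1)).prod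
        / (cs.map (fun c => (Z 1 c).1 + (Z 1 c).2)).prod := by
    unfold Pout
    exact prod_map_div _ _ cs
  have hP : Pout 1 (.node cs)
      = (cs.map (fun c => (Z 1 c).1 + (Z 1 c).2)).prod
        / ((cs.map (fun c => (Z 1 c).1 + (Z 1 c).2)).prod
          + (cs.map (fun c => (Z 1 c).1)).prod) := by
    unfold Pout
    rw [hZ1, hZ2]
  rw [hP, hprod]
  set F := (cs.map (fun c => (Z 1 c).1)).prod
  set G := (cs.map (fun c => (Z 1 c).1 + (Z 1 c).2)).prod
  have h1 : 1 + F/G = (G + F)/G := by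
    rw [add_div, div_self hGpos.ne']
  rw [h1, one_div_div]

private lemma Pout_node_mem (cs : List RTree) :
    Pout 1 (.node cs) ∈ Set.Icc (1/2:ℝ) 1 := by
  rw [Pout_node]
  have h0 : 0 ≤ (cs.map (Pout 1)).prod := by
    apply List.prod_nonneg
    intro x hx
    obtain ⟨c, _, rfl⟩ := List.mem_map.1 hx
    exact (Pout_mem_Icc c).1
  have h1 : (cs.map (Pout 1)).prod ≤ 1 := by
    induction cs with
    | nil => simp
    | cons c l ih =>
      simp only [List.map_cons, List.prod_cons]
      have hc := Pout_mem_Icc c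
      have hl : 0 ≤ (l.map (Pout 1)).prod := by
        apply List.prod_nonneg
        intro x hx
        obtain ⟨d, _, rfl⟩ := List.mem_map.1 hx
        exact (Pout_mem_Icc d).1
      have hl1 : (l.map (Pout 1)).prod ≤ 1 := by
        apply ih
        apply List.prod_nonneg
        intro x hx
        obtain ⟨d, _, rfl⟩ := List.mem_map.1 hx
        exact (Pout_mem_Icc d).1
      nlinarith [hc.1, hc.2]
  constructor
  · rw [le_div_iff₀ (by linarith)]; linarith
  · rw [div_le_one (by linarith)]; linarith

private lemma okBC_succ {t : ℕ} {T : RTree} (h : okBC (t+1) T) :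
    ∃ cs, T = .node cs ∧ ∀ c ∈ cs, okBC t c := by
  cases h with
  | node h => exact ⟨_, rfl, h⟩

private lemma degOK_node {cs : List RTree} (h : degOK 4 (.node cs)) :
    cs.length ≤ 3 ∧ ∀ c ∈ cs, degOK 4 c := by
  cases h with
  | node h1 h2 => exact ⟨by omega, h2⟩

private lemma aux : ∀ (t : ℕ) (T₁ T₂ : RTree), SameShape T₁ T₂ →
    okBC (t+1) T₁ → okBC (t+1) T₂ → degOK 4 T₁ → degOK 4 T₂ →
    |Pout 1 T₁ - Pout 1 T₂| ≤ 1/2 * (9/10:ℝ)^t := by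
  intro t
  induction t with
  | zero =>
    intro T₁ T₂ _ h1 h2 _ _
    obtain ⟨cs, rfl, _⟩ := okBC_succ h1
    obtain ⟨ds, rfl, _⟩ := okBC_succ h2
    have m1 := Pout_node_mem cs
    have m2 := Pout_node_mem ds
    obtain ⟨m1a, m1b⟩ := m1
    obtain ⟨m2a, m2b⟩ := m2
    rw [pow_zero, mul_one, abs_sub_le_iff]
    constructor <;> linarith
  | succ t ih =>
    intro T₁ T₂ hs h1 h2 hd1 hd2
    obtain ⟨cs, rfl, hbc1⟩ := okBC_succ h1
    obtain ⟨ds, rfl, hbc2⟩ := okBC_succ h2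
    have hss : List.Forall₂ SameShape cs ds := by
      cases hs with
      | node h => exact h
    obtain ⟨hlen1, hdc1⟩ := degOK_node hd1
    obtain ⟨hlen2, hdc2⟩ := degOK_node hd2
    set δ := 1/2 * (9/10:ℝ)^t with hδ
    have hδ0 : 0 ≤ δ := by positivity
    have hF : List.Forall₂ (fun c d => Pout 1 c ∈ Set.Icc (1/2:ℝ) 1
        ∧ Pout 1 d ∈ Set.Icc (1/2:ℝ) 1 ∧ |Pout 1 c - Pout 1 d| ≤ δ) cs ds := by
      apply forall₂_strengthen hss
      intro c hc d hd hcd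
      obtain ⟨cs', hceq, _⟩ := okBC_succ (hbc1 c hc)
      obtain ⟨ds', hdeq, _⟩ := okBC_succ (hbc2 d hd)
      refine ⟨?_, ?_, ?_⟩
      · rw [hceq]; exact Pout_node_mem cs'
      · rw [hdeq]; exact Pout_node_mem ds'
      · exact ih c d hcd (hbc1 c hc) (hbc2 d hd) (hdc1 c hc) (hdc2 d hd)
    have hF' : List.Forall₂ (fun a b => a ∈ Set.Icc (1/2:ℝ) 1
        ∧ b ∈ Set.Icc (1/2:ℝ) 1 ∧ |a - b| ≤ δ) (cs.map (Pout 1)) (ds.map (Pout 1)) := by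
      rw [List.forall₂_map_left_iff, List.forall₂_map_right_iff]
      exact hF
    have hlen : (cs.map (Pout 1)).length ≤ 3 := by
      rw [List.length_map]; exact hlen1
    rw [Pout_node, Pout_node]
    calc |1/(1 + (cs.map (Pout 1)).prod) - 1/(1 + (ds.map (Pout 1)).prod)|
        ≤ 9/10 * δ := list_key3 hδ0 hF' hlen
      _ = 1/2 * (9/10:ℝ)^(t+1) := by rw [pow_succ]; ring

end RTree

end Auxiliary

open RTree in
/-- correlation decay. For every `t ≥ 2` and every rooted tree of depth at
most `t` with maximum degree at most `4`, equipped with two boundary conditions `b₁, b₂`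
on its depth-`t` leaves (i.e. two boundary-decorated trees of the same shape), the root
exclusion probabilities under the uniform measure differ by at most `(0.9)^(t-2)`. -/
theorem statement8 (t : ℕ) (ht : 2 ≤ t) (T₁ T₂ : RTree) (hshape : SameShape T₁ T₂)
    (hbc₁ : okBC t T₁) (hbc₂ : okBC t T₂)
    (hdeg₁ : rootDegOK 4 T₁) (hdeg₂ : rootDegOK 4 T₂) :
    |Pout 1 T₁ - Pout 1 T₂| ≤ (9 / 10 : ℝ) ^ (t - 2) := by
  obtain ⟨u, rfl⟩ : ∃ u, t = u + 2 := ⟨t - 2, by omega⟩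
  obtain ⟨cs, rfl, hbc1'⟩ := okBC_succ hbc₁
  obtain ⟨ds, rfl, hbc2'⟩ := okBC_succ hbc₂
  have hss : List.Forall₂ SameShape cs ds := by
    cases hshape with
    | node h => exact h
  obtain ⟨hlen1, hdc1⟩ : cs.length ≤ 4 ∧ ∀ c ∈ cs, degOK 4 c := by
    cases hdeg₁ with
    | node h1 h2 => exact ⟨h1, h2⟩
  obtain ⟨hlen2, hdc2⟩ : ds.length ≤ 4 ∧ ∀ c ∈ ds, degOK 4 c := by
    cases hdeg₂ with
    | node h1 h2 => exact ⟨h1, h2⟩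
  set δ := 1/2 * (9/10:ℝ)^u with hδ
  have hδ0 : 0 ≤ δ := by positivity
  have hF : List.Forall₂ (fun c d => Pout 1 c ∈ Set.Icc (1/2:ℝ) 1
      ∧ Pout 1 d ∈ Set.Icc (1/2:ℝ) 1 ∧ |Pout 1 c - Pout 1 d| ≤ δ) cs ds := by
    apply forall₂_strengthen hss
    intro c hc d hd hcd
    obtain ⟨cs', hceq, _⟩ := okBC_succ (hbc1' c hc)
    obtain ⟨ds', hdeq, _⟩ := okBC_succ (hbc2' d hd)
    refine ⟨?_, ?_, ?_⟩
    · rw [hceq]; exact Pout_node_mem cs'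
    · rw [hdeq]; exact Pout_node_mem ds'
    · exact RTree.aux u c d hcd (hbc1' c hc) (hbc2' d hd) (hdc1 c hc) (hdc2 d hd)
  have hF' : List.Forall₂ (fun a b => a ∈ Set.Icc (1/2:ℝ) 1
      ∧ b ∈ Set.Icc (1/2:ℝ) 1 ∧ |a - b| ≤ δ) (cs.map (Pout 1)) (ds.map (Pout 1)) := by
    rw [List.forall₂_map_left_iff, List.forall₂_map_right_iff]
    exact hF
  have hlen : (cs.map (Pout 1)).length ≤ 4 := by
    rw [List.length_map]; exact hlen1
  have hfin : u + 2 - 2 = u := by omega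
  rw [hfin, Pout_node, Pout_node]
  calc |1/(1 + (cs.map (Pout 1)).prod) - 1/(1 + (ds.map (Pout 1)).prod)|
      ≤ 2 * δ := list_key4 hδ0 hF' hlen
    _ = (9/10:ℝ)^u := by rw [hδ]; ring
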